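/- Let Ω be a compact metric space, α a Borel probability measure on Ω, φ : Ω^n → ℝ bounded measurable and symmetric, and suppose Φ(μ) := μ^{⊗n}(φ) is convex on probability measures. Define Z̃(N) = ∫_{Ω^N} exp(−N·Φ(μ_x)) dα^{⊗N}(x), where μ_x is the empirical measure of x. Then Z̃(M+N) ≥ Z̃(M)·Z̃(N) for all M, N ≥ 1; equivalently, the sequence N·p̃(N) with p̃(N) = N^{-1} log Z̃(N) is superadditive. -/

import Mathlib

open MeasureTheory Filter
open scoped ENNReal

namespace EVPaux

variable {Ω : Type*} [MeasurableSpace Ω]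

/-- The empirical measure of a tuple. -/
noncomputable def emp (N : ℕ) (x : Fin N → Ω) : Measure Ω :=
  ((N : ℝ≥0∞))⁻¹ • ∑ i : Fin N, Measure.dirac (x i)

/-- The uniform measure on `Fin N`. -/
noncomputable def unif (N : ℕ) : Measure (Fin N) :=
  ((N : ℝ≥0∞))⁻¹ • ∑ i : Fin N, Measure.dirac i

lemma map_unif {N : ℕ} (x : Fin N → Ω) : (unif N).map x = emp N x := by
  ext s hs
  rw [Measure.map_apply (measurable_of_countable x) hs]
  simp only [unif, emp, Measure.smul_apply, Measure.coe_finset_sum, Finset.sum_apply,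
    Measure.dirac_apply' _ hs, Measure.dirac_apply' _ (measurable_of_countable x hs),
    smul_eq_mul]
  congr 1

lemma isProb_unif {N : ℕ} (hN : 1 ≤ N) : IsProbabilityMeasure (unif N) := by
  constructor
  have hN0 : (N : ℝ≥0∞) ≠ 0 := by exact_mod_cast Nat.one_le_iff_ne_zero.mp hN
  simp [unif, Measure.smul_apply, ENNReal.inv_mul_cancel hN0 (ENNReal.natCast_ne_top N)]

lemma isProb_emp {N : ℕ} (hN : 1 ≤ N) (x : Fin N → Ω) : IsProbabilityMeasure (emp N x) := by
  rw [← map_unif]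
  haveI := isProb_unif hN
  exact Measure.isProbabilityMeasure_map (measurable_of_countable x).aemeasurable

lemma pi_emp (n : ℕ) {N : ℕ} (hN : 1 ≤ N) (x : Fin N → Ω) :
    Measure.pi (fun _ : Fin n => emp N x) =
      Measure.map (fun g : Fin n → Fin N => x ∘ g) (Measure.pi fun _ : Fin n => unif N) := by
  haveI := isProb_emp hN x
  exact ((measurePreserving_pi (fun _ : Fin n => unif N) (fun _ : Fin n => emp N x)
    (fun _ => ⟨measurable_of_countable x, map_unif x⟩)).map_eq).symm

lemma integral_pi_emp (n : ℕ) {N : ℕ} (hN : 1 ≤ N) (x : Fin N → Ω)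
    (φ : (Fin n → Ω) → ℝ) (hmeas : Measurable φ) :
    ∫ y, φ y ∂(Measure.pi fun _ : Fin n => emp N x) =
      ∑ g : Fin n → Fin N,
        ((Measure.pi fun _ : Fin n => unif N) {g}).toReal • φ (x ∘ g) := by
  haveI := isProb_unif hN
  rw [pi_emp n hN x, integral_map (measurable_of_countable _).aemeasurable
    hmeas.aestronglyMeasurable]
  exact integral_fintype Integrable.of_finite

lemma measurable_integral_pi_emp (n : ℕ) {N : ℕ} (hN : 1 ≤ N)
    (φ : (Fin n → Ω) → ℝ) (hmeas : Measurable φ) :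
    Measurable (fun x : Fin N → Ω =>
      ∫ y, φ y ∂(Measure.pi fun _ : Fin n => emp N x)) := by
  simp only [integral_pi_emp n hN _ φ hmeas]
  simp_rw [smul_eq_mul]
  refine Finset.measurable_sum _ fun g _ => measurable_const.mul ?_
  exact hmeas.comp (measurable_pi_iff.mpr fun i => measurable_pi_apply (g i))

lemma abs_integral_pi_emp_le (n : ℕ) {N : ℕ} (hN : 1 ≤ N) (x : Fin N → Ω)
    (φ : (Fin n → Ω) → ℝ) (C : ℝ) (hb : ∀ y, |φ y| ≤ C) :
    |∫ y, φ y ∂(Measure.pi fun _ : Fin n => emp N x)| ≤ C := by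
  haveI := isProb_emp hN x
  haveI : IsProbabilityMeasure (Measure.pi fun _ : Fin n => emp N x) := inferInstance
  have := norm_integral_le_of_norm_le_const
    (μ := Measure.pi fun _ : Fin n => emp N x) (f := φ) (C := C)
    (Filter.Eventually.of_forall fun y => by simpa [Real.norm_eq_abs] using hb y)
  simpa [Real.norm_eq_abs] using this

end EVPaux

open EVPaux

/-- For a bounded measurable symmetric `n`-body interaction `φ` on a
compact metric space `Ω` such that `Φ(μ) = μ^{⊗n}(φ)` is convex on probability measures,
the partition functions `Z̃(N) = ∫ exp(−N Φ(μ_x)) dα^{⊗N}(x)` (with `μ_x` the empirical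
measure) satisfy `Z̃(M+N) ≥ Z̃(M)·Z̃(N)`; equivalently `N·p̃(N)` is superadditive. -/
theorem evp_partition_superadditive
    {Ω : Type*} [MetricSpace Ω] [CompactSpace Ω] [MeasurableSpace Ω] [BorelSpace Ω]
    (α : Measure Ω) [IsProbabilityMeasure α] (n : ℕ) (hn : 1 ≤ n)
    (φ : (Fin n → Ω) → ℝ) (hmeas : Measurable φ) (C : ℝ) (hb : ∀ y, |φ y| ≤ C)
    (hsym : ∀ (σ : Equiv.Perm (Fin n)) (y : Fin n → Ω), φ (y ∘ σ) = φ y)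
    (Φ : Measure Ω → ℝ)
    (hΦ : ∀ μ : Measure Ω, Φ μ = ∫ y, φ y ∂(Measure.pi fun _ : Fin n => μ))
    (hconv : ∀ μ ν : Measure Ω, IsProbabilityMeasure μ → IsProbabilityMeasure ν →
      ∀ t : ℝ, 0 ≤ t → t ≤ 1 →
        Φ (ENNReal.ofReal t • μ + ENNReal.ofReal (1 - t) • ν) ≤ t * Φ μ + (1 - t) * Φ ν)
    (Zt : ℕ → ℝ)
    (hZ : ∀ N : ℕ, Zt N = ∫ x : Fin N → Ω,
        Real.exp (-((N : ℝ) * Φ (((N : ℝ≥0∞))⁻¹ • ∑ i : Fin N, Measure.dirac (x i))))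
          ∂(Measure.pi fun _ : Fin N => α))
    (M N : ℕ) (hM : 1 ≤ M) (hN : 1 ≤ N) :
    Zt M * Zt N ≤ Zt (M + N) := by
  classical
  -- the empirical measures in the statement are `emp`
  have hemp : ∀ (K : ℕ) (x : Fin K → Ω),
      (((K : ℝ≥0∞))⁻¹ • ∑ i : Fin K, Measure.dirac (x i)) = emp K x := fun _ _ => rfl
  -- basic facts about Φ on empirical measures
  have hΦmeas : ∀ (K : ℕ), 1 ≤ K → Measurable (fun x : Fin K → Ω => Φ (emp K x)) := by
    intro K hK
    simpa only [hΦ] using measurable_integral_pi_emp (Ω := Ω) n (N := K) hK φ hmeas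
  have hΦbdd : ∀ (K : ℕ), 1 ≤ K → ∀ x : Fin K → Ω, |Φ (emp K x)| ≤ C := by
    intro K hK x
    rw [hΦ]
    exact abs_integral_pi_emp_le n hK x φ C hb
  -- the integrand for each K
  set F : ∀ K : ℕ, (Fin K → Ω) → ℝ :=
    fun K x => Real.exp (-((K : ℝ) * Φ (emp K x))) with hF
  have hZF : ∀ K : ℕ, Zt K = ∫ x : Fin K → Ω, F K x ∂(Measure.pi fun _ : Fin K => α) := by
    intro K; rw [hZ K]; rfl
  -- integrability of each F K
  have hFmeas : ∀ (K : ℕ), 1 ≤ K → Measurable (F K) := by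
    intro K hK
    exact Real.measurable_exp.comp ((measurable_const.mul (hΦmeas K hK)).neg)
  have hFint : ∀ (K : ℕ), 1 ≤ K →
      Integrable (F K) (Measure.pi fun _ : Fin K => α) := by
    intro K hK
    refine Integrable.mono' (integrable_const (Real.exp ((K : ℝ) * C)))
      (hFmeas K hK).aestronglyMeasurable (Filter.Eventually.of_forall fun x => ?_)
    have h1 : -((K : ℝ) * Φ (emp K x)) ≤ (K : ℝ) * C := by
      have := (abs_le.mp (hΦbdd K hK x)).1
      nlinarith [Nat.cast_nonneg (α := ℝ) K]
    simpa [hF, Real.norm_eq_abs, abs_of_pos (Real.exp_pos _)] using Real.exp_le_exp.mpr h1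
  -- the measure-preserving concatenation map
  set e1 : (Fin M ⊕ Fin N → Ω) ≃ᵐ (Fin M → Ω) × (Fin N → Ω) :=
    MeasurableEquiv.sumPiEquivProdPi (fun _ : Fin M ⊕ Fin N => Ω) with he1
  set e2 : (Fin M ⊕ Fin N → Ω) ≃ᵐ (Fin (M + N) → Ω) :=
    MeasurableEquiv.piCongrLeft (fun _ => Ω) finSumFinEquiv with he2
  set T : (Fin M → Ω) × (Fin N → Ω) ≃ᵐ (Fin (M + N) → Ω) := e1.symm.trans e2 with hT
  have hTpres : MeasurePreserving T
      ((Measure.pi fun _ : Fin M => α).prod (Measure.pi fun _ : Fin N => α))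
      (Measure.pi fun _ : Fin (M + N) => α) := by
    exact (measurePreserving_piCongrLeft (fun _ : Fin (M + N) => α) finSumFinEquiv).comp
      (measurePreserving_sumPiEquivProdPi_symm (fun _ : Fin M ⊕ Fin N => α))
  -- the pointwise formula for T
  have hTapply : ∀ (x : Fin M → Ω) (y : Fin N → Ω) (s : Fin M ⊕ Fin N),
      T (x, y) (finSumFinEquiv s) = Sum.elim x y s := by
    intro x y s
    show e2 (e1.symm (x, y)) (finSumFinEquiv s) = Sum.elim x y s
    rw [he2]
    rw [MeasurableEquiv.piCongrLeft_apply_apply]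
    cases s <;> rfl
  -- decomposition of the empirical measure of a concatenation
  have hMN0 : ((M : ℝ) + N) ≠ 0 := by positivity
  obtain ⟨t, ht⟩ : ∃ t : ℝ, t = (M : ℝ) / ((M : ℝ) + N) := ⟨_, rfl⟩
  have ht0 : 0 ≤ t := by rw [ht]; positivity
  have ht1 : t ≤ 1 := by rw [ht, div_le_one (by positivity)]; linarith [Nat.cast_nonneg (α := ℝ) N]
  have h1t : 1 - t = (N : ℝ) / ((M : ℝ) + N) := by rw [ht]; field_simp; ring
  have hMne : (M : ℝ≥0∞) ≠ 0 := by exact_mod_cast Nat.one_le_iff_ne_zero.mp hM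
  have hNne : (N : ℝ≥0∞) ≠ 0 := by exact_mod_cast Nat.one_le_iff_ne_zero.mp hN
  have hofr : ENNReal.ofReal t = (M : ℝ≥0∞) * ((M : ℝ≥0∞) + N)⁻¹ := by
    rw [ht, ENNReal.ofReal_div_of_pos (by positivity), div_eq_mul_inv]
    norm_num [ENNReal.ofReal_natCast, ENNReal.ofReal_add]
  have hofr' : ENNReal.ofReal (1 - t) = (N : ℝ≥0∞) * ((M : ℝ≥0∞) + N)⁻¹ := by
    rw [h1t, ENNReal.ofReal_div_of_pos (by positivity), div_eq_mul_inv]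
    norm_num [ENNReal.ofReal_natCast, ENNReal.ofReal_add]
  have hempT : ∀ (x : Fin M → Ω) (y : Fin N → Ω),
      emp (M + N) (T (x, y)) =
        ENNReal.ofReal t • emp M x + ENNReal.ofReal (1 - t) • emp N y := by
    intro x y
    have hsum : (∑ k : Fin (M + N), Measure.dirac (T (x, y) k)) =
        (∑ i : Fin M, Measure.dirac (x i)) + ∑ j : Fin N, Measure.dirac (y j) := by
      rw [← Equiv.sum_comp finSumFinEquiv (fun k => Measure.dirac (T (x, y) k))]
      simp_rw [hTapply x y]
      rw [Fintype.sum_sum_type]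
      rfl
    rw [emp, hsum, smul_add, hofr, hofr']
    have hK : ((M + N : ℕ) : ℝ≥0∞)⁻¹ = ((M : ℝ≥0∞) + N)⁻¹ := by push_cast; ring_nf
    rw [emp, emp, smul_smul, smul_smul, hK]
    congr 1
    · congr 1
      rw [mul_comm, ← mul_assoc, ENNReal.inv_mul_cancel hMne (ENNReal.natCast_ne_top M), one_mul]
    · congr 1
      rw [mul_comm, ← mul_assoc, ENNReal.inv_mul_cancel hNne (ENNReal.natCast_ne_top N), one_mul]
  -- the pointwise inequality
  have hpt : ∀ (x : Fin M → Ω) (y : Fin N → Ω),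
      F M x * F N y ≤ F (M + N) (T (x, y)) := by
    intro x y
    rw [hF, ← Real.exp_add]
    apply Real.exp_le_exp.mpr
    have hconv' := hconv (emp M x) (emp N y) (isProb_emp hM x) (isProb_emp hN y) t ht0 ht1
    rw [← hempT x y] at hconv'
    have hcast : ((M + N : ℕ) : ℝ) = (M : ℝ) + N := by push_cast; ring
    have htmul : ((M : ℝ) + N) * t = (M : ℝ) := by rw [ht]; field_simp
    have h1tmul : ((M : ℝ) + N) * (1 - t) = (N : ℝ) := by rw [h1t]; field_simp
    have : ((M + N : ℕ) : ℝ) * Φ (emp (M + N) (T (x, y))) ≤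
        (M : ℝ) * Φ (emp M x) + (N : ℝ) * Φ (emp N y) := by
      calc ((M + N : ℕ) : ℝ) * Φ (emp (M + N) (T (x, y)))
          ≤ ((M : ℝ) + N) * (t * Φ (emp M x) + (1 - t) * Φ (emp N y)) := by
            rw [hcast]
            exact mul_le_mul_of_nonneg_left hconv' (by positivity)
        _ = (M : ℝ) * Φ (emp M x) + (N : ℝ) * Φ (emp N y) := by
            rw [mul_add, ← mul_assoc, ← mul_assoc, htmul, h1tmul]
    linarith
  -- put everything together
  rw [hZF M, hZF N, hZF (M + N), ← integral_prod_mul]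
  rw [← hTpres.integral_comp T.measurableEmbedding (F (M + N))]
  haveI : IsProbabilityMeasure (Measure.pi fun _ : Fin M => α) := inferInstance
  exact integral_mono ((hFint M hM).mul_prod (hFint N hN))
    ((hTpres.integrable_comp_emb T.measurableEmbedding).mpr (hFint (M + N) (by omega)))
    (fun p => hpt p.1 p.2)
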